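/- Let k be a field and let p = p_1^{m_1}···p_r^{m_r} ∈ k[x] be monic with pairwise distinct monic irreducible separable factors p_1, …, p_r; set p̃ = p_1···p_r, p̄ = p/p̃ and m = max_j m_j, and let q ∈ k[x] satisfy q·p̃' ≡ 1 (mod p̄). Define a sequence of polynomials by h_0 = x and h_{n+1} = the remainder of the Euclidean division of h_n − (p̃∘h_n)·(q∘h_n) by p. Let K be a splitting field of p̃ over k and let N be the smallest integer with 2^N ≥ m. Then: (i) h_n(λ) = λ for every root λ of p̃ in K and every n ≥ 0; (ii) p divides p̃∘h_N in k[x]; and (iii) for every root λ of p̃ in K, (x − λ)^{n_λ} divides h_N − λ in K[x], where n_λ is the multiplicity of λ as a root of p. -/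

import Mathlib

open Polynomial

/-- Taylor expansion to second order for composition of polynomials. -/
theorem newton_taylor_comp {k : Type*} [CommRing k] (f a b : k[X]) :
    ∃ c : k[X], f.comp (a + b) = f.comp a + (derivative f).comp a * b + c * b ^ 2 := by
  obtain ⟨c, hc⟩ := Polynomial.binomExpansion (f.map (C : k →+* k[X])) a b
  refine ⟨c, ?_⟩
  simpa [Polynomial.eval_map, Polynomial.derivative_map, Polynomial.comp,
    Polynomial.eval₂_map] using hc

theorem newton_dvd_comp {k : Type*} [CommRing k] {a b : k[X]} (t : k[X]) (hab : a ∣ b) :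
    a.comp t ∣ b.comp t := by
  obtain ⟨c, rfl⟩ := hab
  exact ⟨c.comp t, by rw [Polynomial.mul_comp]⟩

theorem newton_polynomial_solves_congruences
    {k K : Type*} [Field k] [Field K] [Algebra k K]
    (r : ℕ) (hr : 0 < r) (pf : Fin r → k[X]) (mexp : Fin r → ℕ)
    (hmon : ∀ i, (pf i).Monic) (hirr : ∀ i, Irreducible (pf i))
    (hsep : ∀ i, (pf i).Separable)
    (hdist : ∀ i j, i ≠ j → pf i ≠ pf j)
    (hm1 : ∀ i, 1 ≤ mexp i)
    (p ptilde pbar : k[X])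
    (hp : p = ∏ i, pf i ^ mexp i)
    (hpt : ptilde = ∏ i, pf i)
    (hpb : p = ptilde * pbar)
    (q : k[X]) (hq : pbar ∣ q * derivative ptilde - 1)
    (m : ℕ) (hm : m = Finset.univ.sup mexp)
    (hsplit : IsSplittingField k K ptilde)
    (N : ℕ) (hN1 : m ≤ 2 ^ N) (hN2 : ∀ M, m ≤ 2 ^ M → N ≤ M)
    (h : ℕ → k[X]) (hh0 : h 0 = X)
    (hhrec : ∀ n, h (n + 1) = (h n - (ptilde.comp (h n)) * (q.comp (h n))) %ₘ p) :
    (∀ n : ℕ, ∀ lam : K, aeval lam ptilde = 0 → aeval lam (h n) = lam) ∧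
    p ∣ ptilde.comp (h N) ∧
    (∀ lam : K, aeval lam ptilde = 0 →
      (X - C lam) ^ (rootMultiplicity lam (p.map (algebraMap k K))) ∣
        (h N).map (algebraMap k K) - C lam) := by
  -- basic facts
  have hpm : p.Monic := by
    rw [hp]; exact monic_prod_of_monic _ _ fun i _ => (hmon i).pow _
  have hptm : ptilde.Monic := by
    rw [hpt]; exact monic_prod_of_monic _ _ fun i _ => hmon i
  have hcop : ∀ i j, i ≠ j → IsCoprime (pf i) (pf j) := by
    intro i j hij
    rw [(hirr i).coprime_iff_not_dvd]
    intro hdvd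
    exact hdist i j hij (eq_of_monic_of_associated (hmon i) (hmon j)
      ((hirr i).associated_of_dvd (hirr j) hdvd))
  -- pbar = ∏ pf i ^ (mexp i - 1)
  have hpbar : pbar = ∏ i, pf i ^ (mexp i - 1) := by
    have h1 : ptilde * pbar = ptilde * ∏ i, pf i ^ (mexp i - 1) := by
      rw [← hpb, hp, hpt, ← Finset.prod_mul_distrib]
      refine Finset.prod_congr rfl fun i _ => ?_
      rw [← pow_succ']
      congr 1
      have := hm1 i; omega
    exact mul_left_cancel₀ hptm.ne_zero h1
  -- Part (i)
  have part1 : ∀ n : ℕ, ∀ lam : K, aeval lam ptilde = 0 → aeval lam (h n) = lam := by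
    intro n
    induction n with
    | zero => intro lam _; simp [hh0]
    | succ n ih =>
      intro lam hl
      have hpz : aeval lam p = 0 := by rw [hpb, map_mul, hl, zero_mul]
      rw [hhrec n, modByMonic_eq_sub_mul_div _ p]
      simp only [map_sub, map_mul, aeval_comp, ih lam hl, hl, zero_mul, sub_zero, hpz]
  -- key invariant
  have key : ∀ n : ℕ, ∀ i, pf i ^ (min (2 ^ n) (mexp i)) ∣ (pf i).comp (h n) := by
    intro n
    induction n with
    | zero =>
      intro i
      have hmin : min (2 ^ 0) (mexp i) = 1 := by
        have := hm1 i; simp only [pow_zero]; omega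
      rw [hmin, pow_one, hh0, comp_X]
    | succ n ih =>
      intro i
      obtain ⟨u, hu⟩ := hq
      set t := h n with ht
      set s := (t - ptilde.comp t * q.comp t) /ₘ p with hsdef
      have hstep : h (n + 1) = t + (-(ptilde.comp t * q.comp t) - p * s) := by
        rw [hhrec n, modByMonic_eq_sub_mul_div _ p]; ring
      obtain ⟨c, hc⟩ := newton_taylor_comp (pf i) t (-(ptilde.comp t * q.comp t) - p * s)
      set g : k[X] := ∏ j ∈ Finset.univ.erase i, pf j with hgdef
      have hgt : ptilde = pf i * g := by
        rw [hpt, hgdef, Finset.mul_prod_erase _ _ (Finset.mem_univ i)]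
      have h1 : ptilde.comp t = (pf i).comp t * g.comp t := by rw [hgt, mul_comp]
      have h2 : (derivative ptilde).comp t =
          (derivative (pf i)).comp t * g.comp t + (pf i).comp t * (derivative g).comp t := by
        rw [hgt, derivative_mul, add_comp, mul_comp, mul_comp]
      have h3 : q.comp t * (derivative ptilde).comp t - 1 = pbar.comp t * u.comp t := by
        have := congrArg (fun z => Polynomial.comp z t) hu
        simpa [sub_comp, mul_comp, one_comp] using this
      -- the algebraic identity
      have heq : (pf i).comp (h (n + 1)) =
          -((pf i).comp t * pbar.comp t * u.comp t)
          + ((pf i).comp t) ^ 2 * ((derivative g).comp t * q.comp t)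
          - (derivative (pf i)).comp t * p * s
          + c * (-(ptilde.comp t * q.comp t) - p * s) ^ 2 := by
        rw [hstep]
        linear_combination hc - (derivative (pf i)).comp t * q.comp t * h1
          + (pf i).comp t * q.comp t * h2 - (pf i).comp t * h3
      -- numeric bounds
      set a := min (2 ^ n) (mexp i) with hadef
      set b := min (2 ^ (n + 1)) (mexp i) with hbdef
      have hpow : (2 : ℕ) ^ (n + 1) = 2 * 2 ^ n := by ring
      have h2n : 1 ≤ 2 ^ n := Nat.one_le_two_pow
      have ha1 : 1 ≤ a := by have := hm1 i; omega
      have ham : a ≤ mexp i := min_le_right _ _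
      have hbm : b ≤ mexp i := min_le_right _ _
      have hb2a : b ≤ 2 * a := by omega
      have hdF : pf i ^ a ∣ (pf i).comp t := ih i
      have hdF1 : pf i ∣ (pf i).comp t := (dvd_pow_self (pf i) (by omega)).trans hdF
      have hdp : pf i ^ mexp i ∣ p := by
        rw [hp]; exact Finset.dvd_prod_of_mem _ (Finset.mem_univ i)
      have hdpb : pf i ^ (mexp i - 1) ∣ pbar.comp t := by
        have h4 : pf i ^ (mexp i - 1) ∣ pbar := by
          rw [hpbar]; exact Finset.dvd_prod_of_mem _ (Finset.mem_univ i)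
        refine (pow_dvd_pow_of_dvd hdF1 (mexp i - 1)).trans ?_
        have := newton_dvd_comp t h4
        simpa [pow_comp] using this
      have hd2sq : pf i ^ b ∣ ((pf i).comp t) ^ 2 := by
        refine (pow_dvd_pow _ hb2a).trans ?_
        rw [mul_comm 2 a, pow_mul]
        exact pow_dvd_pow_of_dvd hdF 2
      have hdΔ : pf i ^ a ∣ (-(ptilde.comp t * q.comp t) - p * s) := by
        refine dvd_sub (dvd_neg.mpr ?_) (((pow_dvd_pow _ ham).trans hdp).mul_right s)
        rw [h1]
        exact (hdF.mul_right _).mul_right _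
      rw [heq]
      refine dvd_add (dvd_sub (dvd_add (dvd_neg.mpr ?_) ?_) ?_) ?_
      · -- pf i ^ b ∣ F * pbar.comp t * u.comp t
        refine ((pow_dvd_pow _ hbm).trans ?_).mul_right _
        have hsplitpow : pf i ^ mexp i = pf i * pf i ^ (mexp i - 1) := by
          rw [← pow_succ']; congr 1; have := hm1 i; omega
        rw [hsplitpow]
        exact mul_dvd_mul hdF1 hdpb
      · exact hd2sq.mul_right _
      · exact ((pow_dvd_pow _ hbm).trans hdp).trans ((dvd_mul_left p _).mul_right s)
      · refine Dvd.dvd.mul_left ?_ c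
        refine (pow_dvd_pow _ hb2a).trans ?_
        rw [mul_comm 2 a, pow_mul]
        exact pow_dvd_pow_of_dvd hdΔ 2
  -- Part (ii)
  have part2 : p ∣ ptilde.comp (h N) := by
    rw [hp]
    refine Finset.prod_dvd_of_coprime ?_ ?_
    · intro i _ j _ hij
      exact ((hcop i j hij).pow : IsCoprime (pf i ^ mexp i) (pf j ^ mexp j))
    · intro i _
      have hmi : mexp i ≤ 2 ^ N := le_trans (hm ▸ Finset.le_sup (Finset.mem_univ i)) hN1
      have hk := key N i
      rw [min_eq_right hmi] at hk
      refine hk.trans (newton_dvd_comp _ ?_)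
      rw [hpt]
      exact Finset.dvd_prod_of_mem _ (Finset.mem_univ i)
  refine ⟨part1, part2, ?_⟩
  -- Part (iii)
  intro lam hlam
  set φ := algebraMap k K with hφ
  set P := ptilde.map φ with hP
  set H := (h N).map φ with hH
  have hroot : P.IsRoot lam := by
    simpa [hP, hφ, IsRoot, eval_map, ← aeval_def] using hlam
  obtain ⟨sq, hs⟩ := (dvd_iff_isRoot.mpr hroot)
  have hsept : ptilde.Separable := by
    rw [hpt]
    exact Polynomial.separable_prod (fun i j hij => hcop i j hij) hsep
  have hPs : Squarefree P := (hsept.map).squarefree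
  have hHlam : H.eval lam = lam := by
    have := part1 N lam hlam
    rwa [aeval_def, ← eval_map] at this
  have hslam : sq.eval lam ≠ 0 := by
    intro hzero
    obtain ⟨s', hs'⟩ := dvd_iff_isRoot.mpr hzero
    have hdd : (X - C lam) * (X - C lam) ∣ P := ⟨s', by rw [hs, hs', mul_assoc]⟩
    exact Polynomial.not_isUnit_X_sub_C lam (hPs _ hdd)
  have hd1 : (X - C lam) ^ (rootMultiplicity lam (p.map φ)) ∣ p.map φ :=
    pow_rootMultiplicity_dvd _ _
  have hd2 : p.map φ ∣ P.comp H := by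
    obtain ⟨w, hw⟩ := part2
    exact ⟨w.map φ, by rw [hP, hH, ← Polynomial.map_comp, hw, Polynomial.map_mul]⟩
  have hfac : P.comp H = (H - C lam) * sq.comp H := by
    rw [hs, mul_comp, sub_comp, X_comp, C_comp]
  have hnd : ¬ (X - C lam) ∣ sq.comp H := by
    intro hdvd
    have hz : (sq.comp H).eval lam = 0 := by
      obtain ⟨w, hw⟩ := hdvd; simp [hw]
    rw [eval_comp, hHlam] at hz
    exact hslam hz
  have hcop2 : IsCoprime ((X - C lam) ^ (rootMultiplicity lam (p.map φ))) (sq.comp H) :=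
    (((prime_X_sub_C lam).coprime_iff_not_dvd).mpr hnd).pow_left
  exact hcop2.dvd_of_dvd_mul_right (by rw [← hfac]; exact hd1.trans hd2)
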